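/- arXiv:1107.5262 — 4 statements merged into one kernel-verified Lean document; each statement's English description precedes it below -/
import Mathlib

section
/- Let p̃₁, p̃₂, p̃₃, p̃₄ ∈ K[t,s] be nonzero polynomials with gcd(p̃₁,p̃₂,p̃₃,p̃₄) = 1. For each i ∈ {1,2,3,4} and each of the three indices j ≠ i, let q_{i,j} ∈ K[t,s] be the denominator of p̃_j/p̃_i written in reduced form. Then the set of affine base points { (t₀,s₀) ∈ K² : p̃₁(t₀,s₀) = p̃₂(t₀,s₀) = p̃₃(t₀,s₀) = p̃₄(t₀,s₀) = 0 } equals the intersection over i = 1,...,4 of the sets { (t₀,s₀) ∈ K² : lcm of the three polynomials q_{i,j} (j ≠ i) vanishes at (t₀,s₀) }. -/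
open MvPolynomial

theorem affine_base_points_eq_inter {K : Type*} [Field K] [IsAlgClosed K] [CharZero K]
    (p : Fin 4 → MvPolynomial (Fin 2) K)
    (hne : ∀ i, p i ≠ 0)
    (hgcd : ∀ d : MvPolynomial (Fin 2) K, (∀ i, d ∣ p i) → IsUnit d)
    (q : Fin 4 → Fin 4 → MvPolynomial (Fin 2) K)
    -- for `j ≠ i`, `q i j` is the denominator of `p j / p i` in reduced form,
    -- i.e. `q i j = p i / gcd (p j) (p i)`.
    (hq : ∀ i j : Fin 4, j ≠ i → ∃ g : MvPolynomial (Fin 2) K,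
        g ∣ p j ∧ g ∣ p i ∧
        (∀ d : MvPolynomial (Fin 2) K, d ∣ p j → d ∣ p i → d ∣ g) ∧
        q i j * g = p i)
    (L : Fin 4 → MvPolynomial (Fin 2) K)
    -- `L i` is an lcm of the three polynomials `q i j`, `j ≠ i`.
    (hL₁ : ∀ i j : Fin 4, j ≠ i → q i j ∣ L i)
    (hL₂ : ∀ i : Fin 4, ∀ m : MvPolynomial (Fin 2) K,
        (∀ j : Fin 4, j ≠ i → q i j ∣ m) → L i ∣ m) :
    {x : Fin 2 → K | ∀ i, MvPolynomial.eval x (p i) = 0} =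
      ⋂ i : Fin 4, {x : Fin 2 → K | MvPolynomial.eval x (L i) = 0} := by
  ext x
  simp only [Set.mem_setOf_eq, Set.mem_iInter]
  constructor
  · intro hx i
    obtain ⟨fs, hfs, u, hu⟩ :=
      UniqueFactorizationMonoid.exists_prime_factors (p i) (hne i)
    have h0 : (fs.map (eval x)).prod * eval x (u : MvPolynomial (Fin 2) K) = 0 := by
      rw [← map_multiset_prod, ← map_mul, hu, hx i]
    have hu0 : eval x (u : MvPolynomial (Fin 2) K) ≠ 0 :=
      (u.isUnit.map (eval x)).ne_zero
    have hprod : (fs.map (eval x)).prod = 0 := by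
      rcases mul_eq_zero.mp h0 with h | h
      · exact h
      · exact absurd h hu0
    have hmem : (0 : K) ∈ fs.map (eval x) := Multiset.prod_eq_zero_iff.mp hprod
    obtain ⟨f, hfmem, hf0⟩ := Multiset.mem_map.mp hmem
    have hfprime : Prime f := hfs f hfmem
    have hfpi : f ∣ p i := by
      have : f ∣ fs.prod := Multiset.dvd_prod hfmem
      exact this.trans ⟨(u : MvPolynomial (Fin 2) K), hu.symm⟩
    by_cases hcase : ∃ j, j ≠ i ∧ f ∣ q i j
    · obtain ⟨j, hji, hdvd⟩ := hcase
      obtain ⟨h, hh⟩ := hdvd.trans (hL₁ i j hji)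
      rw [hh, map_mul, hf0, zero_mul]
    · push_neg at hcase
      exfalso
      have hall : ∀ j, f ∣ p j := by
        intro j
        by_cases hji : j = i
        · rw [hji]; exact hfpi
        · obtain ⟨g, hgj, hgi, _, hqg⟩ := hq i j hji
          have hdvd : f ∣ q i j * g := hqg ▸ hfpi
          rcases hfprime.2.2 _ _ hdvd with h | h
          · exact absurd h (hcase j hji)
          · exact h.trans hgj
      exact hfprime.not_unit (hgcd f hall)
  · intro hx i
    have hLdvd : L i ∣ ∏ j ∈ Finset.univ.filter (· ≠ i), q i j :=
      hL₂ i _ (fun j hj => Finset.dvd_prod_of_mem _ (by simp [hj]))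
    obtain ⟨h, hh⟩ := hLdvd
    have hz : eval x (∏ j ∈ Finset.univ.filter (· ≠ i), q i j) = 0 := by
      rw [hh, map_mul, hx i, zero_mul]
    rw [map_prod] at hz
    obtain ⟨j, hj, hqj⟩ := Finset.prod_eq_zero_iff.mp hz
    have hji : j ≠ i := by simpa using hj
    obtain ⟨g, _, _, _, hqg⟩ := hq i j hji
    rw [← hqg, map_mul, hqj, zero_mul]
end

section
/- Let f ∈ K[x,y,z] be an irreducible polynomial of total degree d defining the surface Z = {(x,y,z) ∈ K³ : f(x,y,z) = 0}. Then Z is a plane (equivalently d = 1) if and only if there exists a nonempty subset Ω ⊆ Z, dense in Z in the Zariski topology, such that mult(A,f) = d for every A ∈ Ω. -/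
open MvPolynomial

/-- The multiplicity of a point `A` on the hypersurface defined by `f`:
the smallest total degree of a monomial of the translate of `f` by `A`. -/
noncomputable def multAt {K : Type*} [CommRing K] {n : ℕ} (A : Fin n → K)
    (f : MvPolynomial (Fin n) K) : ℕ :=
  sInf {k | ∃ m ∈ (MvPolynomial.aeval
      (fun i => MvPolynomial.X i + MvPolynomial.C (A i)) f).support,
      (m.sum fun _ e => e) = k}

section Aux

lemma sum_eq_degree' {σ : Type*} (m : σ →₀ ℕ) : (m.sum fun _ e => e) = Finsupp.degree m := rfl

lemma degree_add' {σ : Type*} (a b : σ →₀ ℕ) :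
    Finsupp.degree (a + b) = Finsupp.degree a + Finsupp.degree b := by
  simp only [Finsupp.degree_eq_weight_one]
  exact map_add _ _ _

lemma degree_single' {σ : Type*} (i : σ) (k : ℕ) :
    Finsupp.degree (Finsupp.single i k) = k := by
  rcases eq_or_ne k 0 with rfl | hk
  · simp
  · exact Finsupp.degree_single i k

variable {K : Type*} [CommRing K] {n : ℕ}

lemma aeval_apply_eq_eval {σ : Type*} {R : Type*} [CommSemiring R] (x : σ → R)
    (p : MvPolynomial σ R) : aeval x p = eval x p := by
  rw [← coe_aeval_eq_eval]; rfl

lemma tr_tr (A B : Fin n → K) (f : MvPolynomial (Fin n) K) :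
    aeval (fun i => X i + C (B i)) (aeval (fun i => X i + C (A i)) f)
      = aeval (fun i => X i + C (A i + B i)) f := by
  show bind₁ _ (bind₁ _ f) = bind₁ _ f
  rw [bind₁_bind₁]
  have : (fun i => (bind₁ fun i => X i + C (B i)) (X i + C (A i)))
      = fun i : Fin n => X i + C (A i + B i) := by
    funext i
    simp [C_add]
    ring
  rw [this]

lemma tr_eq_zero_iff (A : Fin n → K) (f : MvPolynomial (Fin n) K) :
    aeval (fun i => X i + C (A i)) f = 0 ↔ f = 0 := by
  constructor
  · intro h
    have := congrArg (aeval (fun i => X i + C (-A i))) h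
    rw [tr_tr] at this
    simpa using this
  · rintro rfl; simp

lemma eval_tr (A x : Fin n → K) (f : MvPolynomial (Fin n) K) :
    eval x (aeval (fun i => X i + C (A i)) f) = eval (fun i => x i + A i) f := by
  have h := aeval_bind₁ (S := K) x (fun i : Fin n => X i + C (A i)) f
  simp only [map_add, aeval_X, aeval_C, Algebra.algebraMap_self_apply] at h
  rw [← aeval_apply_eq_eval, ← aeval_apply_eq_eval]
  exact h

lemma totalDegree_tr_le [Nontrivial K] (A : Fin n → K) (f : MvPolynomial (Fin n) K) :
    (aeval (fun i => X i + C (A i)) f).totalDegree ≤ f.totalDegree := by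
  conv_lhs => rw [f.as_sum]
  rw [map_sum]
  apply totalDegree_finsetSum_le
  intro m hm
  rw [aeval_monomial]
  refine le_trans (totalDegree_mul _ _) ?_
  have h1 : (algebraMap K (MvPolynomial (Fin n) K) (coeff m f)).totalDegree = 0 := by
    simpa using totalDegree_C (R := K) (σ := Fin n) (coeff m f)
  rw [h1, zero_add]
  refine le_trans (le_trans (totalDegree_finset_prod _ _) ?_) (le_totalDegree hm)
  have key : ∀ i ∈ m.support, ((X i + C (A i)) ^ m i).totalDegree ≤ m i := by
    intro i _
    refine le_trans (totalDegree_pow _ _) ?_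
    have h2 : (X i + C (A i)).totalDegree ≤ 1 := by
      refine le_trans (totalDegree_add _ _) ?_
      simp [totalDegree_X, totalDegree_C]
    have := Nat.mul_le_mul_left (m i) h2
    simpa using this
  refine le_trans (Finset.sum_le_sum key) ?_
  exact le_of_eq rfl

lemma pderiv_tr (A : Fin n → K) (i : Fin n) (f : MvPolynomial (Fin n) K) :
    pderiv i (aeval (fun j => X j + C (A j)) f)
      = aeval (fun j => X j + C (A j)) (pderiv i f) := by
  induction f using MvPolynomial.induction_on with
  | C a => simp [algHom_C]
  | add p q hp hq =>
    simp only [map_add]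
    exact congrArg₂ (· + ·) hp hq
  | mul_X p j hp =>
    simp only [map_mul, aeval_X, pderiv_mul, hp, map_add]
    by_cases h : i = j
    · subst h
      simp [pderiv_X_self]
    · simp [pderiv_X_of_ne (Ne.symm h), pderiv_C]

lemma totalDegree_pderiv_le (i : Fin n) (f : MvPolynomial (Fin n) K) :
    (pderiv i f).totalDegree ≤ f.totalDegree - 1 := by
  conv_lhs => rw [f.as_sum]
  rw [map_sum]
  apply totalDegree_finsetSum_le
  intro m hm
  rw [pderiv_monomial]
  by_cases h : m i = 0
  · simp [h]
  · refine le_trans (totalDegree_monomial_le _ _) ?_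
    have hle : Finsupp.single i 1 ≤ m := by
      rw [Finsupp.single_le_iff]; omega
    have hm' : (m - Finsupp.single i 1) + Finsupp.single i 1 = m := tsub_add_cancel_of_le hle
    have hdeg : Finsupp.degree (m - Finsupp.single i 1) + 1 = Finsupp.degree m := by
      conv_rhs => rw [← hm']
      rw [degree_add', degree_single']
    have hmtot : Finsupp.degree m ≤ f.totalDegree := by
      rw [← sum_eq_degree']; exact le_totalDegree hm
    have : ((m - Finsupp.single i 1).sum fun _ e => e)
        = Finsupp.degree (m - Finsupp.single i 1) := sum_eq_degree' _
    simp only [Function.id_def]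
    omega

lemma constantCoeff_pderiv_eq_zero (i : Fin n) (g : MvPolynomial (Fin n) K)
    (hg : ∀ m ∈ g.support, 2 ≤ Finsupp.degree m) :
    constantCoeff (pderiv i g) = 0 := by
  conv_lhs => rw [g.as_sum]
  rw [map_sum, map_sum]
  apply Finset.sum_eq_zero
  intro m hm
  rw [pderiv_monomial, constantCoeff_monomial]
  by_cases h : m i = 0
  · simp [h]
  · rw [if_neg]
    intro heq
    have hle : m ≤ Finsupp.single i 1 := tsub_eq_zero_iff_le.mp heq
    have h1 : Finsupp.degree m ≤ 1 := by
      calc Finsupp.degree m = ∑ j ∈ m.support, m j := rfl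
        _ ≤ ∑ j ∈ m.support, (Finsupp.single i 1) j := by
            apply Finset.sum_le_sum
            intro j _
            exact hle j
        _ ≤ 1 := by
            by_cases hi : i ∈ m.support
            · rw [Finset.sum_eq_single_of_mem i hi]
              · simp
              · intro j _ hj; simp [Finsupp.single_apply, Ne.symm hj]
            · refine le_trans (le_of_eq (Finset.sum_eq_zero ?_)) (by omega)
              intro j hj
              have : j ≠ i := fun hji => hi (hji ▸ hj)
              simp [Finsupp.single_apply, Ne.symm this]
    have := hg m hm
    omega

lemma totalDegree_eq_zero_of_pderiv {F : Type*} [Field F] [CharZero F]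
    (f : MvPolynomial (Fin n) F)
    (h : ∀ i, pderiv i f = 0) : f.totalDegree = 0 := by
  rw [totalDegree_eq_zero_iff]
  intro m hm x
  by_contra hx
  have hc : coeff m f ≠ 0 := mem_support_iff.mp hm
  have h0 : coeff (m - Finsupp.single x 1) (pderiv x f) = 0 := by rw [h x]; simp
  have hexp : coeff (m - Finsupp.single x 1) (pderiv x f) = coeff m f * (m x : F) := by
    conv_lhs => rw [f.as_sum, map_sum]
    rw [coeff_sum]
    simp only [pderiv_monomial, coeff_monomial]
    refine (Finset.sum_eq_single_of_mem m hm ?_).trans (by rw [if_pos rfl])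
    intro s hs hsm
    by_cases hsx : s x = 0
    · simp [hsx]
    · rw [if_neg]
      intro heq
      apply hsm
      have h1 : (s - Finsupp.single x 1) + Finsupp.single x 1 = s :=
        tsub_add_cancel_of_le (by rw [Finsupp.single_le_iff]; omega)
      have h2 : (m - Finsupp.single x 1) + Finsupp.single x 1 = m :=
        tsub_add_cancel_of_le (by rw [Finsupp.single_le_iff]; omega)
      rw [← h1, ← h2, heq]
  rw [h0] at hexp
  have hmx : (m x : F) ≠ 0 := Nat.cast_ne_zero.mpr hx
  rcases mul_eq_zero.mp hexp.symm with h' | h'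
  · exact hc h'
  · exact hmx h'

end Aux

section Domain
variable {σ : Type*} {R : Type*} [CommRing R] [IsDomain R]

omit [IsDomain R] in
lemma top_ne_zero {p : MvPolynomial σ R} (hp : p ≠ 0) :
    homogeneousComponent p.totalDegree p ≠ 0 := by
  obtain ⟨m, hm, hdeg⟩ := Finset.exists_mem_eq_sup p.support (support_nonempty.mpr hp)
    (fun m => m.sum fun _ e => e)
  intro h0
  have hco := coeff_homogeneousComponent (σ := σ) (n := p.totalDegree) (φ := p) m
  rw [h0] at hco
  rw [coeff_zero, if_pos] at hco
  · exact mem_support_iff.mp hm hco.symm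
  · rw [← sum_eq_degree']
    exact hdeg.symm

omit [IsDomain R] in
lemma rest_deg_lt {p : MvPolynomial σ R}
    (hr : p - homogeneousComponent p.totalDegree p ≠ 0) :
    (p - homogeneousComponent p.totalDegree p).totalDegree < p.totalDegree := by
  set r := p - homogeneousComponent p.totalDegree p with hrdef
  have key : ∀ m ∈ r.support, (m.sum fun _ e => e) < p.totalDegree := by
    intro m hm
    have hco : coeff m r
        = coeff m p - (if Finsupp.degree m = p.totalDegree then coeff m p else 0) := by
      rw [hrdef, coeff_sub, coeff_homogeneousComponent]
    have hne : coeff m r ≠ 0 := mem_support_iff.mp hm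
    by_cases hd : Finsupp.degree m = p.totalDegree
    · rw [if_pos hd] at hco; simp [hco] at hne
    · rw [if_neg hd, sub_zero] at hco
      have : m ∈ p.support := mem_support_iff.mpr (hco ▸ hne)
      have hle := le_totalDegree this
      rw [sum_eq_degree'] at hle ⊢
      omega
  obtain ⟨m, hm, hdeg⟩ := Finset.exists_mem_eq_sup r.support (support_nonempty.mpr hr)
    (fun m => m.sum fun _ e => e)
  have : r.totalDegree = m.sum fun _ e => e := hdeg
  rw [this]
  exact key m hm

lemma totalDegree_mul_eq' {p q : MvPolynomial σ R} (hp : p ≠ 0) (hq : q ≠ 0) :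
    (p * q).totalDegree = p.totalDegree + q.totalDegree := by
  refine le_antisymm (totalDegree_mul p q) ?_
  set a := p.totalDegree
  set b := q.totalDegree
  set P := homogeneousComponent a p with hP
  set Q := homogeneousComponent b q with hQ
  have hPh : P.IsHomogeneous a := homogeneousComponent_isHomogeneous a p
  have hQh : Q.IsHomogeneous b := homogeneousComponent_isHomogeneous b q
  have hsplit : p * q = P * Q + ((p - P) * Q + P * (q - Q) + (p - P) * (q - Q)) := by ring
  have hlow : ∀ u v : MvPolynomial σ R, u.totalDegree < a ∨ u = 0 →
      v.totalDegree ≤ b → homogeneousComponent (a + b) (u * v) = 0 := by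
    intro u v hu hv
    rcases hu with hu | rfl
    · apply homogeneousComponent_eq_zero
      calc (u * v).totalDegree ≤ u.totalDegree + v.totalDegree := totalDegree_mul u v
        _ < a + b := by omega
    · simp
  have hlow' : ∀ u v : MvPolynomial σ R, u.totalDegree ≤ a →
      v.totalDegree < b ∨ v = 0 → homogeneousComponent (a + b) (u * v) = 0 := by
    intro u v hu hv
    rcases hv with hv | rfl
    · apply homogeneousComponent_eq_zero
      calc (u * v).totalDegree ≤ u.totalDegree + v.totalDegree := totalDegree_mul u v
        _ < a + b := by omega
    · simp
  have hpP : (p - P).totalDegree < a ∨ (p - P) = 0 := by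
    rcases eq_or_ne (p - P) 0 with h | h
    · exact Or.inr h
    · exact Or.inl (rest_deg_lt h)
  have hqQ : (q - Q).totalDegree < b ∨ (q - Q) = 0 := by
    rcases eq_or_ne (q - Q) 0 with h | h
    · exact Or.inr h
    · exact Or.inl (rest_deg_lt h)
  have htop : homogeneousComponent (a + b) (p * q) = P * Q := by
    rw [hsplit, map_add, map_add, map_add]
    have h1 : homogeneousComponent (a + b) (P * Q) = P * Q := by
      have hmem : P * Q ∈ homogeneousSubmodule σ R (a + b) :=
        (mem_homogeneousSubmodule _ _).mpr (hPh.mul hQh)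
      rw [homogeneousComponent_of_mem hmem, if_pos rfl]
    have h2 : homogeneousComponent (a + b) ((p - P) * Q) = 0 :=
      hlow _ _ hpP hQh.totalDegree_le
    have h3 : homogeneousComponent (a + b) (P * (q - Q)) = 0 :=
      hlow' _ _ hPh.totalDegree_le hqQ
    have h4 : homogeneousComponent (a + b) ((p - P) * (q - Q)) = 0 := by
      rcases hpP with h | h
      · refine hlow _ _ (Or.inl h) ?_
        rcases hqQ with h' | h'
        · exact le_of_lt h'
        · rw [h']; simp
      · rw [h]; simp
    rw [h1, h2, h3, h4]
    ring
  have hPQ : P * Q ≠ 0 := mul_ne_zero (top_ne_zero hp) (top_ne_zero hq)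
  by_contra hlt
  push_neg at hlt
  have := homogeneousComponent_eq_zero (n := a + b) (φ := p * q) hlt
  rw [htop] at this
  exact hPQ this

end Domain

theorem plane_iff_dense_max_mult {K : Type*} [Field K] [IsAlgClosed K] [CharZero K]
    (f : MvPolynomial (Fin 3) K) (hf : Irreducible f) (d : ℕ)
    (hd : f.totalDegree = d)
    (Z : Set (Fin 3 → K)) (hZ : Z = {x | MvPolynomial.eval x f = 0}) :
    d = 1 ↔
      ∃ Ω : Set (Fin 3 → K), Ω.Nonempty ∧ Ω ⊆ Z ∧
        (∀ g : MvPolynomial (Fin 3) K,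
          (∀ x ∈ Ω, MvPolynomial.eval x g = 0) → ∀ x ∈ Z, MvPolynomial.eval x g = 0) ∧
        (∀ A ∈ Ω, multAt A f = d) := by
  have hfne : f ≠ 0 := hf.ne_zero
  have hZeq : Z = MvPolynomial.zeroLocus K (Ideal.span {f}) := by
    rw [hZ]
    ext x
    simp only [Set.mem_setOf_eq, mem_zeroLocus_iff, aeval_apply_eq_eval]
    constructor
    · intro hx p hp
      obtain ⟨c, rfl⟩ := Ideal.mem_span_singleton.mp hp
      rw [map_mul, hx, zero_mul]
    · intro h
      exact h f (Ideal.mem_span_singleton_self f)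
  have hdvd : ∀ g : MvPolynomial (Fin 3) K, (∀ x ∈ Z, eval x g = 0) → f ∣ g := by
    intro g hg
    have hprime : Prime f := (UniqueFactorizationMonoid.irreducible_iff_prime).mp hf
    have hPI : (Ideal.span {f}).IsPrime := (Ideal.span_singleton_prime hfne).mpr hprime
    have hmem : g ∈ MvPolynomial.vanishingIdeal K (MvPolynomial.zeroLocus K (Ideal.span {f})) := by
      rw [mem_vanishingIdeal_iff]
      intro x hx
      exact (aeval_apply_eq_eval x g).trans (hg x (hZeq ▸ hx))
    rwa [MvPolynomial.IsPrime.vanishingIdeal_zeroLocus, Ideal.mem_span_singleton] at hmem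
  constructor
  · intro hd1
    refine ⟨Z, ?_, subset_rfl, fun g hg => hg, ?_⟩
    · -- nonempty
      by_contra hempty
      rw [Set.not_nonempty_iff_eq_empty] at hempty
      have : f ∣ 1 := hdvd 1 (by rw [hempty]; intro x hx; exact absurd hx (Set.notMem_empty x))
      exact hf.not_isUnit (isUnit_of_dvd_one this)
    · intro A hA
      have hevalA : eval A f = 0 := by rw [hZ] at hA; exact hA
      set g := aeval (fun i => X i + C (A i)) f with hgdef
      have hg0 : g ≠ 0 := fun h => hfne ((tr_eq_zero_iff A f).mp h)
      have hdeg : g.totalDegree ≤ 1 := by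
        rw [hgdef]
        calc (aeval (fun i => X i + C (A i)) f).totalDegree ≤ f.totalDegree :=
              totalDegree_tr_le A f
          _ = 1 := by rw [hd, hd1]
      have hconst : coeff 0 g = 0 := by
        have h1 : eval (0 : Fin 3 → K) g = eval A f := by
          rw [hgdef, eval_tr]
          simp
        have h2 : eval (0 : Fin 3 → K) g = constantCoeff g := by rw [eval_zero]
        rw [← constantCoeff_eq, ← h2, h1, hevalA]
      have hall : ∀ m ∈ g.support, (m.sum fun _ e => e) = 1 := by
        intro m hm
        have hle : (m.sum fun _ e => e) ≤ 1 := le_trans (le_totalDegree hm) hdeg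
        have hne0 : (m.sum fun _ e => e) ≠ 0 := by
          intro h0
          rw [sum_eq_degree', Finsupp.degree_eq_zero_iff] at h0
          subst h0
          exact mem_support_iff.mp hm hconst
        omega
      have hS : {k | ∃ m ∈ g.support, (m.sum fun _ e => e) = k} = {1} := by
        ext k
        simp only [Set.mem_setOf_eq, Set.mem_singleton_iff]
        constructor
        · rintro ⟨m, hm, rfl⟩
          exact hall m hm
        · rintro rfl
          obtain ⟨m, hm⟩ := support_nonempty.mpr hg0
          exact ⟨m, hm, hall m hm⟩
      show sInf {k | ∃ m ∈ g.support, (m.sum fun _ e => e) = k} = d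
      rw [hS, hd1]
      exact csInf_singleton 1
  · rintro ⟨Ω, ⟨A₀, hA₀⟩, hΩZ, hdense, hmult⟩
    have hd0 : d ≠ 0 := by
      intro h0
      have hfC : f = C (coeff 0 f) := by
        ext m
        rcases eq_or_ne m 0 with rfl | hm
        · simp [coeff_C]
        · classical
          rw [coeff_C, if_neg (Ne.symm hm)]
          by_contra hc
          have hmem : m ∈ f.support := mem_support_iff.mpr hc
          have hzz := (totalDegree_eq_zero_iff _ f).mp (hd.trans h0) m hmem
          exact hm (Finsupp.ext hzz)
      rcases eq_or_ne (coeff 0 f) 0 with hc0 | hc0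
      · rw [hc0, map_zero] at hfC
        exact hfne hfC
      · have : IsUnit f := by
          rw [hfC]
          exact hc0.isUnit.map (C : K →+* MvPolynomial (Fin 3) K)
        exact hf.not_isUnit this
    have hd2 : ¬ 2 ≤ d := by
      intro h2
      have hsupp : ∀ A ∈ Ω, ∀ m ∈ (aeval (fun i => X i + C (A i)) f).support,
          2 ≤ Finsupp.degree m := by
        intro A hA m hm
        have hmA : multAt A f = d := hmult A hA
        have hle : multAt A f ≤ m.sum fun _ e => e := Nat.sInf_le ⟨m, hm, rfl⟩
        rw [sum_eq_degree'] at hle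
        omega
      have hpz : ∀ i, pderiv i f = 0 := by
        intro i
        have hvan : ∀ x ∈ Z, eval x (pderiv i f) = 0 := by
          apply hdense
          intro A hA
          have h1 : constantCoeff (pderiv i (aeval (fun j => X j + C (A j)) f))
              = eval A (pderiv i f) := by
            rw [pderiv_tr, ← eval_zero, eval_tr]
            simp
          rw [← h1]
          exact constantCoeff_pderiv_eq_zero i _ (hsupp A hA)
        have hdvd' := hdvd _ hvan
        by_contra hne
        obtain ⟨c, hc⟩ := hdvd'
        have hcne : c ≠ 0 := by
          rintro rfl
          rw [mul_zero] at hc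
          exact hne hc
        have heq : (pderiv i f).totalDegree = f.totalDegree + c.totalDegree := by
          rw [hc]
          exact totalDegree_mul_eq' hfne hcne
        have hle := totalDegree_pderiv_le i f
        omega
      have := totalDegree_eq_zero_of_pderiv f hpz
      omega
    omega
end

section
/- Let f ∈ K[x,y,z] be an irreducible polynomial of total degree d > 1. Then there exists at most one point A ∈ K³ such that mult(A,f) = d. -/
open MvPolynomial

namespace AMOHelpers

variable {K : Type*} [Field K]

/-- Translation substitution as a `K`-algebra hom. -/
noncomputable def T (a : Fin 3 → K) : MvPolynomial (Fin 3) K →ₐ[K] MvPolynomial (Fin 3) K :=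
  aeval (fun i => X i + C (a i))

lemma aeval_eq_eval (x : Fin 3 → K) (f : MvPolynomial (Fin 3) K) : aeval x f = eval x f := rfl

lemma T_comp (a b : Fin 3 → K) : (T b).comp (T a) = T (a + b) := by
  apply algHom_ext
  intro i
  simp [T, Pi.add_apply, C_add]
  ring

lemma T_T (a b : Fin 3 → K) (f : MvPolynomial (Fin 3) K) : T b (T a f) = T (a + b) f := by
  rw [← T_comp a b]; rfl

lemma T_zero : (T (0 : Fin 3 → K)) = AlgHom.id K _ := by
  have : (fun i => X i + C ((0 : Fin 3 → K) i)) = (X : Fin 3 → MvPolynomial (Fin 3) K) := by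
    funext i; simp
  rw [T, this, aeval_X_left]

/-- Translation as an algebra equivalence. -/
noncomputable def TE (a : Fin 3 → K) : MvPolynomial (Fin 3) K ≃ₐ[K] MvPolynomial (Fin 3) K :=
  AlgEquiv.ofAlgHom (T a) (T (-a))
    (by rw [T_comp, neg_add_cancel, T_zero])
    (by rw [T_comp, add_neg_cancel, T_zero])

lemma eval_T (x a : Fin 3 → K) (f : MvPolynomial (Fin 3) K) :
    eval x (T a f) = eval (x + a) f := by
  rw [← aeval_eq_eval, ← aeval_eq_eval]
  have h : (aeval x : MvPolynomial (Fin 3) K →ₐ[K] K).comp (T a) = aeval (x + a) := by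
    rw [T, comp_aeval]
    congr 1
    funext i
    simp
  exact congrArg (fun (φ : MvPolynomial (Fin 3) K →ₐ[K] K) => φ f) h

lemma totalDegree_T_le (a : Fin 3 → K) (f : MvPolynomial (Fin 3) K) :
    (T a f).totalDegree ≤ f.totalDegree := by
  rw [T]
  conv_lhs => rw [← f.support_sum_monomial_coeff]
  rw [map_sum]
  refine (totalDegree_finset_sum _ _).trans ?_
  apply Finset.sup_le
  intro m hm
  rw [aeval_monomial]
  refine (totalDegree_mul _ _).trans ?_
  have h1 : (algebraMap K (MvPolynomial (Fin 3) K) (coeff m f)).totalDegree = 0 := by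
    simp [MvPolynomial.algebraMap_eq, totalDegree_C]
  rw [h1, zero_add]
  rw [Finsupp.prod]
  refine (totalDegree_finset_prod _ _).trans ?_
  refine le_trans ?_ (le_totalDegree hm)
  rw [Finsupp.sum]
  apply Finset.sum_le_sum
  intro i _
  refine (totalDegree_pow _ _).trans ?_
  have h2 : (X i + C (a i) : MvPolynomial (Fin 3) K).totalDegree ≤ 1 := by
    refine (totalDegree_add _ _).trans ?_
    simp [totalDegree_X, totalDegree_C]
  calc m i * (X i + C (a i)).totalDegree ≤ m i * 1 := Nat.mul_le_mul_left _ h2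
    _ = m i := mul_one _

lemma irreducible_T {f : MvPolynomial (Fin 3) K} (hf : Irreducible f) (a : Fin 3 → K) :
    Irreducible (T a f) :=
  (MulEquiv.irreducible_iff (TE a)).mpr hf

lemma isHomogeneous_of_support (f : MvPolynomial (Fin 3) K) (n : ℕ)
    (h : ∀ m ∈ f.support, (m.sum fun _ e => e) = n) : f.IsHomogeneous n := by
  intro m hm
  have := h m (mem_support_iff.mpr hm)
  rw [Finsupp.weight_apply]
  simpa [Finsupp.sum, mul_one] using this

lemma eval_smul_homog {g : MvPolynomial (Fin 3) K} {d : ℕ} (hg : g.IsHomogeneous d)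
    (l : K) (x : Fin 3 → K) : eval (l • x) g = l ^ d * eval x g := by
  rw [eval_eq', eval_eq', Finset.mul_sum]
  apply Finset.sum_congr rfl
  intro m hm
  have hdeg : ∑ i, m i = d := by
    have h1 := hg (mem_support_iff.mp hm)
     
    rw [Finsupp.weight_apply] at h1
    rw [← h1, Finsupp.sum_fintype]
    · simp
    · intro i; rfl
  have h2 : ∏ i, (l • x) i ^ m i = l ^ d * ∏ i, x i ^ m i := by
    simp only [Pi.smul_apply, smul_eq_mul, mul_pow]
    rw [Finset.prod_mul_distrib, Finset.prod_pow_eq_pow_sum, hdeg]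
  rw [h2]; ring

lemma homog_of_multAt {f : MvPolynomial (Fin 3) K} {d : ℕ}
    (hdeg : f.totalDegree = d) (A : Fin 3 → K) (h : multAt A f = d) :
    (T A f).IsHomogeneous d := by
  apply isHomogeneous_of_support
  intro m hm
  have hle : (m.sum fun _ e => e) ≤ d :=
    le_trans (le_totalDegree hm) (le_trans (totalDegree_T_le A f) hdeg.le)
  have hmem : (m.sum fun _ e => e) ∈ {k | ∃ m ∈ (MvPolynomial.aeval
      (fun i => MvPolynomial.X i + MvPolynomial.C (A i)) f).support,
      (m.sum fun _ e => e) = k} := ⟨m, hm, rfl⟩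
  have hge : multAt A f ≤ (m.sum fun _ e => e) := Nat.sInf_le hmem
  rw [h] at hge
  omega

lemma const_of_eval [CharZero K] (g : MvPolynomial (Fin 3) K) (c z : Fin 3 → K) (w : K)
    (hval : ∀ l : K, l ≠ 0 → eval (z + l • c) g = w) :
    eval z g = w := by
  set Q : Polynomial K :=
    aeval (fun i => Polynomial.C (z i) + Polynomial.C (c i) * Polynomial.X) g with hQdef
  have hevalQ : ∀ l : K, Polynomial.eval l Q = eval (z + l • c) g := by
    intro l
    have h : ((Polynomial.aeval l).comp
        (aeval (fun i => Polynomial.C (z i) + Polynomial.C (c i) * Polynomial.X))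
          : MvPolynomial (Fin 3) K →ₐ[K] K) = aeval (z + l • c) := by
      rw [comp_aeval]
      congr 1
      funext i
      simp
      ring
    have h2 := congrArg (fun (φ : MvPolynomial (Fin 3) K →ₐ[K] K) => φ g) h
    simp only [AlgHom.comp_apply] at h2
    have e1 : (Polynomial.aeval l) Q = Polynomial.eval l Q := rfl
    have e2 : (aeval (z + l • c) : MvPolynomial (Fin 3) K →ₐ[K] K) g = eval (z + l • c) g := rfl
    rw [← e1, ← e2, hQdef, h2]
  have hQc : Q - Polynomial.C w = 0 := by
    apply Polynomial.eq_zero_of_infinite_isRoot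
    refine ((Set.finite_singleton (0 : K)).infinite_compl).mono ?_
    intro x hx
    have hx0 : x ≠ 0 := by simpa using hx
    simp only [Set.mem_setOf_eq, Polynomial.IsRoot, Polynomial.eval_sub, Polynomial.eval_C]
    rw [hevalQ x, hval x hx0, sub_self]
  have h0 := hevalQ 0
  rw [sub_eq_zero.mp hQc] at h0
  simp only [Polynomial.eval_C] at h0
  rw [h0]
  congr 1
  simp

lemma natDegree_eq_zero_of_comp {S : Type*} [CommRing S] [IsDomain S] [CharZero S]
    (p : Polynomial S) (h : p.comp (Polynomial.X + Polynomial.C 1) = p) : p.natDegree = 0 := by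
  by_contra hn
  obtain ⟨k, hk⟩ : ∃ k, p.natDegree = k + 1 := Nat.exists_eq_succ_of_ne_zero hn
  have ht : Polynomial.taylor 1 p = p := by rwa [Polynomial.taylor_apply]
  have hcoeff : p.coeff k = Polynomial.eval 1 (Polynomial.hasseDeriv k p) := by
    conv_lhs => rw [← ht]
    rw [Polynomial.taylor_coeff]
  set q := Polynomial.hasseDeriv k p with hq
  have hq1 : q.natDegree ≤ 1 := le_trans (Polynomial.natDegree_hasseDeriv_le p k) (by omega)
  have hqe : q = Polynomial.C (q.coeff 1) * Polynomial.X + Polynomial.C (q.coeff 0) :=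
    Polynomial.eq_X_add_C_of_natDegree_le_one hq1
  have heval : Polynomial.eval 1 q = q.coeff 1 + q.coeff 0 := by
    conv_lhs => rw [hqe]
    simp
  have hc1 : q.coeff 1 = ((k + 1 : ℕ) : S) * p.coeff (k + 1) := by
    rw [hq, Polynomial.hasseDeriv_coeff]
    congr 1
    · norm_cast
      rw [add_comm 1 k, Nat.choose_succ_self_right]
    · rw [add_comm 1 k]
  have hc0 : q.coeff 0 = p.coeff k := by
    rw [hq, Polynomial.hasseDeriv_coeff]
    simp
  have hzero : ((k + 1 : ℕ) : S) * p.coeff (k + 1) = 0 := by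
    have h2 := hcoeff
    rw [heval, hc1, hc0] at h2
    exact right_eq_add.mp h2
  have hlc : p.coeff (k + 1) ≠ 0 := by
    rw [← hk]
    exact Polynomial.coeff_ne_zero_of_eq_degree
      (Polynomial.degree_eq_natDegree (fun h0 => hn (by simp [h0])))
  rcases mul_eq_zero.mp hzero with h' | h'
  · exact (Nat.cast_ne_zero.mpr (Nat.succ_ne_zero k)) h'
  · exact hlc h'

lemma degreeOf_zero_of_shift_invariant [CharZero K] (p : MvPolynomial (Fin 3) K)
    (hT : aeval (fun i => X i + C (if i = 0 then 1 else 0)) p = p) :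
    degreeOf 0 p = 0 := by
  set F := (MvPolynomial.finSuccEquiv K 2).toAlgHom with hF
  set Ψ := ((Polynomial.aeval (R := MvPolynomial (Fin 2) K)
      (Polynomial.X + Polynomial.C 1 : Polynomial (MvPolynomial (Fin 2) K))).restrictScalars K)
    with hΨ
  have key : F.comp (aeval (fun i => X i + C (if i = 0 then 1 else (0 : K)))) = Ψ.comp F := by
    apply algHom_ext
    intro i
    induction i using Fin.cases with
    | zero =>
      simp only [AlgHom.comp_apply, aeval_X, if_pos]
      simp only [map_add, hF, AlgEquiv.toAlgHom_eq_coe, AlgHom.coe_coe, finSuccEquiv_X_zero]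
      erw [show ((MvPolynomial.finSuccEquiv K 2) (C 1) : Polynomial (MvPolynomial (Fin 2) K))
        = 1 by simp]
      simp [hΨ]
      erw [finSuccEquiv_X_zero]
      simp
    | succ j =>
      simp only [AlgHom.comp_apply, aeval_X]
      rw [if_neg (Fin.succ_ne_zero j)]
      simp [hF, hΨ, finSuccEquiv_X_succ]
  have h2 : (F p).comp (Polynomial.X + Polynomial.C 1) = F p := by
    have hcongr := congrArg
      (fun (φ : MvPolynomial (Fin 3) K →ₐ[K] Polynomial (MvPolynomial (Fin 2) K)) => φ p) key
    simp only [AlgHom.comp_apply] at hcongr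
    rw [hT] at hcongr
    have hΨq : ∀ q : Polynomial (MvPolynomial (Fin 2) K),
        Ψ q = q.comp (Polynomial.X + Polynomial.C 1) := by
      intro q
      rw [hΨ]
      show Polynomial.aeval _ q = _
      rw [Polynomial.aeval_def, Polynomial.comp, Polynomial.algebraMap_eq]
    conv_rhs => rw [hcongr, hΨq]
  have h3 : (F p).natDegree = 0 := natDegree_eq_zero_of_comp _ h2
  rw [← MvPolynomial.natDegree_finSuccEquiv]
  exact h3

/-- Substitution of a single variable. -/
noncomputable def subsOne (j : Fin 3) (v : MvPolynomial (Fin 3) K) :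
    MvPolynomial (Fin 3) K →ₐ[K] MvPolynomial (Fin 3) K :=
  aeval (fun i => if i = j then v else X i)

lemma subsOne_dvd (j : Fin 3) (v : MvPolynomial (Fin 3) K) (q : MvPolynomial (Fin 3) K) :
    (X j - v) ∣ (q - subsOne j v q) := by
  show (X j - v) ∣ (q - aeval (R := K) (fun i => if i = j then v else X i) q)
  induction q using MvPolynomial.induction_on with
  | C a => simp
  | add p r hp hr =>
    have h : p + r - aeval (R := K) (fun i => if i = j then v else X i) (p + r)
        = (p - aeval (R := K) (fun i => if i = j then v else X i) p)
          + (r - aeval (R := K) (fun i => if i = j then v else X i) r) := by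
      rw [map_add]; ring
    rw [h]
    exact dvd_add hp hr
  | mul_X p i hp =>
    have hXi : aeval (R := K) (fun i => if i = j then v else X i) (X i)
        = if i = j then v else X i := by simp
    have h : p * X i - aeval (R := K) (fun i => if i = j then v else X i) (p * X i)
        = (p - aeval (R := K) (fun i => if i = j then v else X i) p) * X i
          + aeval (R := K) (fun i => if i = j then v else X i) p
            * (X i - (if i = j then v else X i)) := by
      rw [map_mul, hXi]; ring
    rw [h]
    refine dvd_add (hp.mul_right _) ?_
    by_cases hij : i = j
    · subst hij; rw [if_pos rfl]; exact Dvd.dvd.mul_left dvd_rfl _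
    · rw [if_neg hij]; simp

lemma eq_C_of_isUnit : ∀ {n : ℕ} (q : MvPolynomial (Fin n) K), IsUnit q → ∃ u : K, q = C u := by
  intro n
  induction n with
  | zero =>
    intro q _
    obtain ⟨u, hu⟩ := MvPolynomial.C_surjective (Fin 0) q
    exact ⟨u, hu.symm⟩
  | succ n ih =>
    intro q hq
    have h2 : IsUnit (MvPolynomial.finSuccEquiv K n q) := hq.map _
    rw [Polynomial.isUnit_iff] at h2
    obtain ⟨r, hr, hCr⟩ := h2
    obtain ⟨u, hu⟩ := ih r hr
    refine ⟨u, (MvPolynomial.finSuccEquiv K n).injective ?_⟩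
    rw [← hCr, hu]
    simp [MvPolynomial.finSuccEquiv_apply]

lemma eval_linear (a : K) (z : Fin 3 → K) :
    eval z (X 1 - C a * X 2 : MvPolynomial (Fin 3) K) = z 1 - a * z 2 := by
  simp

lemma not_unit_linear (a : K) : ¬ IsUnit (X 1 - C a * X 2 : MvPolynomial (Fin 3) K) := by
  intro h
  obtain ⟨u, hu⟩ := eq_C_of_isUnit _ h
  have h1 := congrArg (eval (fun _ => (0 : K))) hu
  have h2 := congrArg (eval (fun i : Fin 3 => if i = 1 then (1 : K) else 0)) hu
  rw [eval_linear, eval_C] at h1 h2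
  simp at h1 h2
  rw [← h2] at h1
  exact one_ne_zero h1.symm

lemma not_unit_X (i : Fin 3) : ¬ IsUnit (X i : MvPolynomial (Fin 3) K) := by
  intro h
  obtain ⟨u, hu⟩ := eq_C_of_isUnit _ h
  have h1 := congrArg (eval (fun _ => (0 : K))) hu
  have h2 := congrArg (eval (fun _ => (1 : K))) hu
  simp at h1 h2
  rw [← h2] at h1
  exact one_ne_zero h1.symm

lemma binary_not_irred [IsAlgClosed K] {p : MvPolynomial (Fin 3) K} {d : ℕ} (hd2 : 2 ≤ d)
    (hp : p.IsHomogeneous d) (h0 : ∀ m ∈ p.support, m 0 = 0) :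
    ¬ Irreducible p := by
  intro hirr
  have hp0 : p ≠ 0 := hirr.ne_zero
  have htd : p.totalDegree = d := hp.totalDegree hp0
  have hstr : ∀ m ∈ p.support, m 1 ≤ d ∧
      m = Finsupp.single 1 (m 1) + Finsupp.single 2 (d - m 1) := by
    intro m hm
    have hsum : m 0 + m 1 + m 2 = d := by
      have h1 := hp (mem_support_iff.mp hm)
      rw [Finsupp.weight_apply, Finsupp.sum_fintype _ _ (fun i => by simp)] at h1
      simpa [Fin.sum_univ_three] using h1
    have hm0 : m 0 = 0 := h0 m hm
    constructor
    · omega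
    · ext i
      fin_cases i <;> simp [Finsupp.single_apply] <;> omega
  by_cases hB : ∃ m ∈ p.support, m 1 ≠ 0
  · obtain ⟨m', hm', hm'1⟩ := hB
    set r : Polynomial K :=
      ∑ m ∈ p.support, Polynomial.C (coeff m p) * Polynomial.X ^ (m 1) with hrdef
    have hrc : r.coeff (m' 1) = coeff m' p := by
      rw [hrdef, Polynomial.finset_sum_coeff]
      rw [Finset.sum_eq_single m']
      · simp
      · intro m hm hne
        have h1 := (hstr m hm).2
        have h2 := (hstr m' hm').2
        simp only [Polynomial.coeff_C_mul, Polynomial.coeff_X_pow]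
        rw [if_neg, mul_zero]
        intro hEq
        exact hne (by rw [h1, h2, hEq])
      · intro h; exact absurd hm' h
    have hrne : r.coeff (m' 1) ≠ 0 := by rw [hrc]; exact mem_support_iff.mp hm'
    have hdeg : r.degree ≠ 0 := by
      have h1 : 1 ≤ r.natDegree := le_trans (by omega) (Polynomial.le_natDegree_of_ne_zero hrne)
      exact ne_of_gt (Polynomial.natDegree_pos_iff_degree_pos.mp (by omega))
    obtain ⟨a, ha⟩ := IsAlgClosed.exists_root r hdeg
    have haS : ∑ m ∈ p.support, coeff m p * a ^ (m 1) = 0 := by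
      have h1 := ha
      rw [Polynomial.IsRoot, hrdef, Polynomial.eval_finset_sum] at h1
      simpa using h1
    have hkill : subsOne 1 (C a * X 2) p = 0 := by
      conv_lhs => rw [← support_sum_monomial_coeff p]
      rw [map_sum]
      have hterm : ∀ m ∈ p.support,
          subsOne 1 (C a * X 2) (monomial m (coeff m p))
            = C (coeff m p * a ^ (m 1)) * X 2 ^ d := by
        intro m hm
        obtain ⟨hle, hstruct⟩ := hstr m hm
        have hmono : (monomial m (coeff m p) : MvPolynomial (Fin 3) K)
            = C (coeff m p) * X 1 ^ (m 1) * X 2 ^ (d - m 1) := by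
          rw [mul_assoc, X_pow_eq_monomial, X_pow_eq_monomial, monomial_mul, one_mul,
            C_mul_monomial, mul_one, ← hstruct]
        have e1 : subsOne 1 (C a * X 2) (C (coeff m p)) = C (coeff m p) := by
          simp [subsOne]
        have e2 : subsOne 1 (C a * X 2) (X 1) = C a * X 2 := by
          rw [subsOne]
          rw [aeval_X, if_pos rfl]
        have e3 : subsOne 1 (C a * X 2) (X 2) = X 2 := by
          rw [subsOne]
          rw [aeval_X, if_neg (by decide)]
        rw [hmono, map_mul, map_mul, map_pow, map_pow, e1, e2, e3]
        rw [mul_pow, ← C_pow]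
        calc (C (coeff m p) : MvPolynomial (Fin 3) K)
              * (C (a ^ m 1) * X 2 ^ m 1) * X 2 ^ (d - m 1)
            = C (coeff m p * a ^ m 1) * (X 2 ^ m 1 * X 2 ^ (d - m 1)) := by
              rw [C_mul]; ring
          _ = C (coeff m p * a ^ m 1) * X 2 ^ d := by
              rw [← pow_add, Nat.add_sub_cancel' hle]
      rw [Finset.sum_congr rfl hterm, ← Finset.sum_mul, ← map_sum, haS, map_zero, zero_mul]
    have hdvd : (X 1 - C a * X 2) ∣ p := by
      have h1 := subsOne_dvd 1 (C a * X 2) p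
      rwa [hkill, sub_zero] at h1
    obtain ⟨q, hq⟩ := hdvd
    rcases hirr.isUnit_or_isUnit hq with h | h
    · exact not_unit_linear a h
    · obtain ⟨u, hu⟩ := eq_C_of_isUnit _ h
      rw [hu] at hq
      have hle : p.totalDegree ≤ 1 := by
        rw [hq]
        refine (totalDegree_mul _ _).trans ?_
        rw [totalDegree_C, add_zero]
        rw [sub_eq_add_neg, show -(C a * X 2 : MvPolynomial (Fin 3) K) = C (-a) * X 2 by
          rw [map_neg]; ring]
        refine (totalDegree_add _ _).trans ?_
        refine max_le (by rw [totalDegree_X]) ?_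
        refine (totalDegree_mul _ _).trans ?_
        rw [totalDegree_C, totalDegree_X]
      omega
  · push_neg at hB
    have hsub : p.support ⊆ {Finsupp.single 2 d} := by
      intro m hm
      have h1 := (hstr m hm).2
      rw [hB m hm] at h1
      simp only [Finsupp.single_zero, zero_add, Nat.sub_zero] at h1
      simp [h1]
    have hpm : p = monomial (Finsupp.single 2 d) (coeff (Finsupp.single 2 d) p) := by
      conv_lhs => rw [← support_sum_monomial_coeff p]
      rw [Finset.sum_subset hsub (fun m _ hm => by rw [notMem_support_iff.mp hm, map_zero])]
      rw [Finset.sum_singleton]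
    have hc : coeff (Finsupp.single 2 d) p ≠ 0 := by
      intro h
      rw [h, monomial_eq_zero.mpr rfl] at hpm
      exact hp0 hpm
    have hfac : p = X 2 * monomial (Finsupp.single 2 (d - 1)) (coeff (Finsupp.single 2 d) p) := by
      rw [show (X 2 : MvPolynomial (Fin 3) K) = monomial (Finsupp.single 2 1) 1 by
        rw [← C_mul_X_eq_monomial, map_one, one_mul]]
      rw [monomial_mul, one_mul, ← Finsupp.single_add]
      rw [show 1 + (d - 1) = d by omega]
      exact hpm
    rcases hirr.isUnit_or_isUnit hfac with h | h
    · exact not_unit_X 2 h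
    · obtain ⟨u, hu⟩ := eq_C_of_isUnit _ h
      have h1 := congrArg (coeff (Finsupp.single 2 (d - 1))) hu
      rw [coeff_monomial, if_pos rfl, coeff_C, if_neg] at h1
      · exact hc h1
      · intro hEq
        have h3 := congrArg (fun (m : Fin 3 →₀ ℕ) => m 2) hEq
        simp [Finsupp.single_apply] at h3
        omega

/-- Linear substitution by a matrix. -/
noncomputable def subsM (M : Matrix (Fin 3) (Fin 3) K) :
    MvPolynomial (Fin 3) K →ₐ[K] MvPolynomial (Fin 3) K :=
  aeval (fun i => ∑ k, C (M i k) * X k)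

lemma subsM_comp (M N : Matrix (Fin 3) (Fin 3) K) :
    (subsM M).comp (subsM N) = subsM (N * M) := by
  apply algHom_ext
  intro i
  simp only [subsM, AlgHom.comp_apply, aeval_X, map_sum, map_mul, aeval_C, algebraMap_eq,
    Matrix.mul_apply, Finset.mul_sum]
  rw [Finset.sum_comm]
  apply Finset.sum_congr rfl
  intro l _
  rw [Finset.sum_mul]
  apply Finset.sum_congr rfl
  intro k _
  ring

lemma subsM_one (f : MvPolynomial (Fin 3) K) : subsM (1 : Matrix (Fin 3) (Fin 3) K) f = f := by
  have h : subsM (1 : Matrix (Fin 3) (Fin 3) K) = AlgHom.id K _ := by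
    apply algHom_ext
    intro i
    simp [subsM, Matrix.one_apply]
  rw [h]; rfl

lemma eval_subsM (M : Matrix (Fin 3) (Fin 3) K) (x : Fin 3 → K) (f : MvPolynomial (Fin 3) K) :
    eval x (subsM M f) = eval (M.mulVec x) f := by
  have h : ((aeval x : MvPolynomial (Fin 3) K →ₐ[K] K).comp (subsM M)) = aeval (M.mulVec x) := by
    rw [subsM, comp_aeval]
    congr 1
    funext i
    simp [Matrix.mulVec, dotProduct]
  exact congrArg (fun (φ : MvPolynomial (Fin 3) K →ₐ[K] K) => φ f) h

lemma subsM_homog {f : MvPolynomial (Fin 3) K} {d : ℕ} (hf : f.IsHomogeneous d)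
    (M : Matrix (Fin 3) (Fin 3) K) : (subsM M f).IsHomogeneous d := by
  have h := hf.aeval (n := 1) (fun i => ∑ k, C (M i k) * X k)
    (fun i => MvPolynomial.IsHomogeneous.sum _ _ _ (fun k _ => isHomogeneous_C_mul_X _ _))
  simpa [subsM] using h

/-- Linear substitution by an invertible matrix, as an algebra equivalence. -/
noncomputable def subsMEquiv (M : Matrix (Fin 3) (Fin 3) K) (hdet : IsUnit M.det) :
    MvPolynomial (Fin 3) K ≃ₐ[K] MvPolynomial (Fin 3) K :=
  AlgEquiv.ofAlgHom (subsM M) (subsM M⁻¹)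
    (by rw [subsM_comp, Matrix.nonsing_inv_mul M hdet]; exact AlgHom.ext subsM_one)
    (by rw [subsM_comp, Matrix.mul_nonsing_inv M hdet]; exact AlgHom.ext subsM_one)

lemma exists_matrix (c : Fin 3 → K) (hc : c ≠ 0) :
    ∃ M : Matrix (Fin 3) (Fin 3) K, IsUnit M.det ∧
      M.mulVec (fun i => if i = 0 then 1 else 0) = c := by
  obtain ⟨j, hj⟩ : ∃ j, c j ≠ 0 := by
    by_contra h; push_neg at h; exact hc (funext h)
  refine ⟨Matrix.of (fun i k =>
    if k = 0 then c i else if i = Equiv.swap (0 : Fin 3) j k then 1 else 0), ?_, ?_⟩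
  · rw [isUnit_iff_ne_zero, Matrix.det_fin_three]
    fin_cases j <;>
      simp [Equiv.swap_apply_def] <;>
      simpa using hj
  · funext i
    simp [Matrix.mulVec, dotProduct, Fin.sum_univ_three]

end AMOHelpers

open AMOHelpers in
theorem at_most_one_max_mult_point {K : Type*} [Field K] [IsAlgClosed K] [CharZero K]
    (f : MvPolynomial (Fin 3) K) (hf : Irreducible f) (d : ℕ)
    (hd : f.totalDegree = d) (hd1 : 1 < d) :
    ∀ A B : Fin 3 → K, multAt A f = d → multAt B f = d → A = B := by
  intro A B hA hB
  by_contra hAB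
  set c : Fin 3 → K := B - A with hcdef
  have hc : c ≠ 0 := sub_ne_zero.mpr (fun h => hAB h.symm)
  set gA := T A f with hgAdef
  set gB := T B f with hgBdef
  have hgA : gA.IsHomogeneous d := homog_of_multAt hd A hA
  have hgB : gB.IsHomogeneous d := homog_of_multAt hd B hB
  have hirrA : Irreducible gA := irreducible_T hf A
  have hTc : T c gA = gB := by
    rw [hgAdef, T_T, show A + c = B from by funext i; simp [hcdef]]
  have hval : ∀ x, eval x gB = eval (x + c) gA := by
    intro x
    rw [← hTc, eval_T]
  have hkey : ∀ l : K, l ≠ 0 → ∀ z, eval (z + l • c) gA = eval (z + c) gA := by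
    intro l hl z
    have h1 : z + l • c = l • (l⁻¹ • z + c) := by
      rw [smul_add, smul_smul, mul_inv_cancel₀ hl, one_smul]
    have h2 : eval z gB = l ^ d * eval (l⁻¹ • z) gB := by
      conv_lhs => rw [show z = l • (l⁻¹ • z) by rw [smul_smul, mul_inv_cancel₀ hl, one_smul]]
      rw [eval_smul_homog hgB]
    rw [h1, eval_smul_homog hgA, ← hval, ← h2, hval]
  have hstep : ∀ z, eval (z + c) gA = eval z gA := by
    intro z
    exact (const_of_eval gA c z (eval (z + c) gA) (fun l hl => hkey l hl z)).symm
  obtain ⟨M, hMdet, hMe0⟩ := exists_matrix c hc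
  set g' := subsM M gA with hg'def
  have hg'h : g'.IsHomogeneous d := subsM_homog hgA M
  have hirr' : Irreducible g' := by
    have h : g' = (subsMEquiv M hMdet) gA := rfl
    rw [h]
    exact (MulEquiv.irreducible_iff (subsMEquiv M hMdet)).mpr hirrA
  have hTinv : aeval (fun i => X i + C (if i = 0 then (1 : K) else 0)) g' = g' := by
    apply MvPolynomial.funext
    intro x
    have hT : (aeval (fun i => X i + C (if i = 0 then (1 : K) else 0)) g'
        : MvPolynomial (Fin 3) K) = T (fun i => if i = 0 then (1 : K) else 0) g' := rfl
    rw [hT, eval_T, hg'def, eval_subsM, eval_subsM, Matrix.mulVec_add, hMe0]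
    exact hstep (M.mulVec x)
  have hdeg0 : degreeOf 0 g' = 0 := degreeOf_zero_of_shift_invariant g' hTinv
  have hm0 : ∀ m ∈ g'.support, m 0 = 0 := by
    intro m hm
    rw [degreeOf_eq_sup] at hdeg0
    exact (Finset.sup_eq_bot_iff _ _).mp hdeg0 m hm
  exact binary_not_irred (by omega) hg'h hm0 hirr'
end

section
/- Let f₁, ..., f_m ∈ K[u₁,u₂][t] be nonzero polynomials (m ≥ 2), let h = gcd(f₁,...,f_m) in the unique factorization domain K[u₁,u₂][t], and write f_i = f̄_i · h for i = 1,...,m. Let W₁, ..., W_{m−2} be new variables and let (t₀,s₀) ∈ K². Assume that the leading coefficient of f₁ with respect to t does not vanish at (t₀,s₀), and that Res_t(f̄₁, f̄₂ + Σ_{i=3}^{m} W_{i−2}·f̄_i), which is a polynomial in K[u₁,u₂][W₁,...,W_{m−2}], does not vanish identically after substituting (u₁,u₂) = (t₀,s₀). Then h(t₀,s₀,t) is a greatest common divisor of f₁(t₀,s₀,t), ..., f_m(t₀,s₀,t) in K[t], i.e. h(t₀,s₀,t) divides each f_i(t₀,s₀,t) and every common divisor of the f_i(t₀,s₀,t)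 in K[t] divides it. -/
/-- The resultant of two polynomials with respect to their main variable,
defined as the determinant of the Sylvester matrix. -/
noncomputable def sylvesterResultant {R : Type*} [CommRing R] (f g : Polynomial R) : R :=
  (Matrix.of fun (k j : Fin (g.natDegree + f.natDegree)) =>
    Fin.addCases (motive := fun _ => R)
      (fun i : Fin g.natDegree =>
        if (i : ℕ) ≤ (k : ℕ) then f.coeff ((k : ℕ) - (i : ℕ)) else 0)
      (fun i : Fin f.natDegree =>
        if (i : ℕ) ≤ (k : ℕ) then g.coeff ((k : ℕ) - (i : ℕ)) else 0)
      j).det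


lemma sum_shift_eq_zero {R : Type*} [CommRing R] (P : Polynomial R) (x : R)
    (hx : P.eval x = 0) (i n : ℕ) (hi : P.natDegree + i < n) :
    ∑ k ∈ Finset.range n, (if i ≤ k then P.coeff (k - i) else 0) * x ^ k = 0 := by
  have hin : i ≤ n := by omega
  rw [Finset.range_eq_Ico, ← Finset.sum_Ico_consecutive _ (Nat.zero_le i) hin]
  have h1 : ∑ k ∈ Finset.Ico 0 i, (if i ≤ k then P.coeff (k - i) else 0) * x ^ k = 0 := by
    apply Finset.sum_eq_zero; intro kk hk
    rw [Finset.mem_Ico] at hk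
    rw [if_neg (by omega), zero_mul]
  have h2 : ∑ k ∈ Finset.Ico i n, (if i ≤ k then P.coeff (k - i) else 0) * x ^ k
      = ∑ l ∈ Finset.range (n - i), P.coeff l * x ^ (i + l) := by
    rw [Finset.sum_Ico_eq_sum_range]
    apply Finset.sum_congr rfl; intro l _
    rw [if_pos (Nat.le_add_right i l), Nat.add_sub_cancel_left]
  have h3 : ∑ l ∈ Finset.range (n - i), P.coeff l * x ^ (i + l) = x ^ i * P.eval x := by
    rw [Polynomial.eval_eq_sum_range' (show P.natDegree < n - i by omega), Finset.mul_sum]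
    apply Finset.sum_congr rfl; intro l _
    rw [pow_add]; ring
  rw [h1, h2, h3, hx, mul_zero, zero_add]

lemma sylvester_det_zero {R : Type*} [CommRing R] [IsDomain R] (n₁ n₂ : ℕ)
    (P Q : Polynomial R) (hP : P.natDegree ≤ n₁) (hQ : Q.natDegree ≤ n₂)
    (hn : 0 < n₂ + n₁) (x : R) (hPx : P.eval x = 0) (hQx : Q.eval x = 0) :
    (Matrix.of fun (k j : Fin (n₂ + n₁)) =>
      Fin.addCases (motive := fun _ => R)
        (fun i : Fin n₂ => if (i : ℕ) ≤ (k : ℕ) then P.coeff ((k : ℕ) - (i : ℕ)) else 0)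
        (fun i : Fin n₁ => if (i : ℕ) ≤ (k : ℕ) then Q.coeff ((k : ℕ) - (i : ℕ)) else 0)
        j).det = 0 := by
  rw [← Matrix.exists_vecMul_eq_zero_iff]
  refine ⟨fun kk => x ^ (kk : ℕ), ?_, ?_⟩
  · intro hv
    have := congrFun hv ⟨0, hn⟩
    simp at this
  · funext j
    show ∑ kk : Fin (n₂ + n₁), x ^ (kk : ℕ) *
      (Fin.addCases (motive := fun _ => R)
        (fun i : Fin n₂ => if (i : ℕ) ≤ (kk : ℕ) then P.coeff ((kk : ℕ) - (i : ℕ)) else 0)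
        (fun i : Fin n₁ => if (i : ℕ) ≤ (kk : ℕ) then Q.coeff ((kk : ℕ) - (i : ℕ)) else 0)
        j) = 0
    refine Fin.addCases (motive := fun j => (∑ kk : Fin (n₂ + n₁), x ^ (kk : ℕ) *
      (Fin.addCases (motive := fun _ => R)
        (fun i : Fin n₂ => if (i : ℕ) ≤ (kk : ℕ) then P.coeff ((kk : ℕ) - (i : ℕ)) else 0)
        (fun i : Fin n₁ => if (i : ℕ) ≤ (kk : ℕ) then Q.coeff ((kk : ℕ) - (i : ℕ)) else 0)
        j)) = 0) ?_ ?_ j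
    · intro i
      simp only [Fin.addCases_left]
      calc ∑ kk : Fin (n₂ + n₁), x ^ (kk : ℕ) *
            (if (i : ℕ) ≤ (kk : ℕ) then P.coeff ((kk : ℕ) - (i : ℕ)) else 0)
          = ∑ kk ∈ Finset.range (n₂ + n₁),
            (if (i : ℕ) ≤ kk then P.coeff (kk - (i : ℕ)) else 0) * x ^ kk := by
            rw [Finset.sum_range fun kk =>
              (if (i : ℕ) ≤ kk then P.coeff (kk - (i : ℕ)) else 0) * x ^ kk]
            exact Finset.sum_congr rfl fun kk _ => mul_comm _ _
        _ = 0 := sum_shift_eq_zero P x hPx i _ (by have := i.isLt; omega)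
    · intro i
      simp only [Fin.addCases_right]
      calc ∑ kk : Fin (n₂ + n₁), x ^ (kk : ℕ) *
            (if (i : ℕ) ≤ (kk : ℕ) then Q.coeff ((kk : ℕ) - (i : ℕ)) else 0)
          = ∑ kk ∈ Finset.range (n₂ + n₁),
            (if (i : ℕ) ≤ kk then Q.coeff (kk - (i : ℕ)) else 0) * x ^ kk := by
            rw [Finset.sum_range fun kk =>
              (if (i : ℕ) ≤ kk then Q.coeff (kk - (i : ℕ)) else 0) * x ^ kk]
            exact Finset.sum_congr rfl fun kk _ => mul_comm _ _
        _ = 0 := sum_shift_eq_zero Q x hQx i _ (by have := i.isLt; omega)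

/-- mapping the Sylvester resultant along a ring hom gives the Sylvester-style
determinant of the mapped polynomials, with the original sizes. -/
lemma map_sylvesterResultant {R S : Type*} [CommRing R] [CommRing S] (ψ : R →+* S)
    (F G : Polynomial R) :
    ψ (sylvesterResultant F G) =
    (Matrix.of fun (k j : Fin (G.natDegree + F.natDegree)) =>
      Fin.addCases (motive := fun _ => S)
        (fun i : Fin G.natDegree =>
          if (i : ℕ) ≤ (k : ℕ) then (F.map ψ).coeff ((k : ℕ) - (i : ℕ)) else 0)
        (fun i : Fin F.natDegree =>
          if (i : ℕ) ≤ (k : ℕ) then (G.map ψ).coeff ((k : ℕ) - (i : ℕ)) else 0)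
        j).det := by
  rw [sylvesterResultant, RingHom.map_det]
  congr 1
  ext kk j
  simp only [Matrix.map_apply, Matrix.of_apply]
  refine Fin.addCases (motive := fun j => ψ (Fin.addCases (motive := fun _ => R)
      (fun i : Fin G.natDegree =>
        if (i : ℕ) ≤ (kk : ℕ) then F.coeff ((kk : ℕ) - (i : ℕ)) else 0)
      (fun i : Fin F.natDegree =>
        if (i : ℕ) ≤ (kk : ℕ) then G.coeff ((kk : ℕ) - (i : ℕ)) else 0) j)
      = Fin.addCases (motive := fun _ => S)
      (fun i : Fin G.natDegree =>
        if (i : ℕ) ≤ (kk : ℕ) then (F.map ψ).coeff ((kk : ℕ) - (i : ℕ)) else 0)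
      (fun i : Fin F.natDegree =>
        if (i : ℕ) ≤ (kk : ℕ) then (G.map ψ).coeff ((kk : ℕ) - (i : ℕ)) else 0) j) ?_ ?_ j
  · intro i
    simp [Fin.addCases_left, apply_ite ψ, Polynomial.coeff_map]
  · intro i
    simp [Fin.addCases_right, apply_ite ψ, Polynomial.coeff_map]

set_option maxHeartbeats 1000000 in
set_option synthInstance.maxHeartbeats 400000 in
theorem gcd_family_specialization {K : Type*} [Field K] [IsAlgClosed K] [CharZero K]
    (k : ℕ) -- the number of polynomials is `m = k + 2 ≥ 2`
    (f : Fin (k + 2) → Polynomial (MvPolynomial (Fin 2) K))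
    (hf : ∀ i, f i ≠ 0)
    (h : Polynomial (MvPolynomial (Fin 2) K))
    -- `h` is a gcd of the family `f i`:
    (hh₁ : ∀ i, h ∣ f i)
    (hh₂ : ∀ d, (∀ i, d ∣ f i) → d ∣ h)
    (fbar : Fin (k + 2) → Polynomial (MvPolynomial (Fin 2) K))
    (hfbar : ∀ i, f i = fbar i * h)
    (t₀ s₀ : K)
    -- inclusion of `K[u₁,u₂][t]` into `K[u₁,u₂][W₁,…,W_k][t]`:
    (ι : Polynomial (MvPolynomial (Fin 2) K) →+*
        Polynomial (MvPolynomial (Fin k) (MvPolynomial (Fin 2) K)))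
    (hι : ι = Polynomial.mapRingHom MvPolynomial.C)
    -- the leading coefficient of `f₁` w.r.t. `t` does not vanish at `(t₀, s₀)`:
    (hlead : MvPolynomial.eval ![t₀, s₀] (f 0).leadingCoeff ≠ 0)
    -- `Res_t(f̄₁, f̄₂ + Σ W_{i-2}·f̄_i)` does not vanish after substituting
    -- `(u₁,u₂) = (t₀,s₀)`:
    (hres : MvPolynomial.map (MvPolynomial.eval ![t₀, s₀])
        (sylvesterResultant (ι (fbar 0))
          (ι (fbar 1) + ∑ j : Fin k, Polynomial.C (MvPolynomial.X j) *
            ι (fbar ⟨(j : ℕ) + 2, Nat.add_lt_add_right j.isLt 2⟩))) ≠ 0)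
    -- evaluation of the coefficients at `(u₁,u₂) = (t₀,s₀)`:
    (ev : Polynomial (MvPolynomial (Fin 2) K) →+* Polynomial K)
    (hev : ev = Polynomial.mapRingHom (MvPolynomial.eval ![t₀, s₀])) :
    (∀ i, ev h ∣ ev (f i)) ∧ ∀ d : Polynomial K, (∀ i, d ∣ ev (f i)) → d ∣ ev h := by
  classical
  subst hev hι
  set E : MvPolynomial (Fin 2) K →+* K := MvPolynomial.eval ![t₀, s₀] with hE
  simp only [Polynomial.coe_mapRingHom]
  refine ⟨fun i => Polynomial.map_dvd E (hh₁ i), ?_⟩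
  intro d hd
  -- `f 0` specializes to a nonzero polynomial
  have hf0ne : Polynomial.map E (f 0) ≠ 0 := by
    intro h0
    apply hlead
    rw [Polynomial.leadingCoeff]
    have hc : (Polynomial.map E (f 0)).coeff (f 0).natDegree = 0 := by rw [h0]; simp
    rwa [Polynomial.coeff_map] at hc
  have hfbar0_ne : Polynomial.map E (fbar 0) ≠ 0 := by
    intro h0
    apply hf0ne
    rw [hfbar 0, Polynomial.map_mul, h0, zero_mul]
  set g : Polynomial K := Finset.gcd Finset.univ (fun i => Polynomial.map E (fbar i)) with hg
  have hgdvd : ∀ i, g ∣ Polynomial.map E (fbar i) :=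
    fun i => Finset.gcd_dvd (Finset.mem_univ i)
  have hgne : g ≠ 0 := fun h0 => hfbar0_ne (zero_dvd_iff.mp (h0 ▸ hgdvd 0))
  -- the specialized `fbar i` are coprime
  have hgu : IsUnit g := by
    by_contra hgu
    obtain ⟨α, hα⟩ := IsAlgClosed.exists_root g
      (fun hdeg => hgu (Polynomial.isUnit_iff_degree_eq_zero.mpr hdeg))
    have hroot : ∀ i, (Polynomial.map E (fbar i)).eval α = 0 := fun i =>
      Polynomial.eval_eq_zero_of_dvd_of_eval_eq_zero (hgdvd i) hα
    set ψ : MvPolynomial (Fin k) (MvPolynomial (Fin 2) K) →+* MvPolynomial (Fin k) K :=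
      MvPolynomial.map E with hψ
    set ιC : Polynomial (MvPolynomial (Fin 2) K) →+*
        Polynomial (MvPolynomial (Fin k) (MvPolynomial (Fin 2) K)) :=
      Polynomial.mapRingHom MvPolynomial.C with hιC
    set F : Polynomial (MvPolynomial (Fin k) (MvPolynomial (Fin 2) K)) := ιC (fbar 0) with hF
    set G : Polynomial (MvPolynomial (Fin k) (MvPolynomial (Fin 2) K)) :=
      ιC (fbar 1) + ∑ j : Fin k, Polynomial.C (MvPolynomial.X j) *
        ιC (fbar ⟨(j : ℕ) + 2, Nat.add_lt_add_right j.isLt 2⟩) with hG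
    -- the evaluation homomorphism at `t = C α` after specializing coefficients
    set Φ : Polynomial (MvPolynomial (Fin k) (MvPolynomial (Fin 2) K)) →+*
        MvPolynomial (Fin k) K :=
      (Polynomial.evalRingHom (MvPolynomial.C α)).comp (Polynomial.mapRingHom ψ) with hΦ
    have hcomp : ψ.comp (MvPolynomial.C : MvPolynomial (Fin 2) K →+* _)
        = (MvPolynomial.C : K →+* MvPolynomial (Fin k) K).comp E := by
      apply RingHom.ext
      intro a
      simp [hψ, MvPolynomial.map_C]
    have key : ∀ p : Polynomial (MvPolynomial (Fin 2) K),
        Φ (ιC p) = MvPolynomial.C ((Polynomial.map E p).eval α) := by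
      intro p
      have h1 : Φ (ιC p) = Polynomial.eval (MvPolynomial.C α)
          (Polynomial.map MvPolynomial.C (Polynomial.map E p)) := by
        simp only [hΦ, hιC, RingHom.comp_apply, Polynomial.coe_mapRingHom,
          Polynomial.map_map, hcomp]
        rfl
      rw [h1, Polynomial.eval_map, Polynomial.eval₂_at_apply]
    have keydeg : ∀ p : Polynomial (MvPolynomial (Fin 2) K),
        (ιC p).natDegree = p.natDegree := fun p =>
      Polynomial.natDegree_map_eq_of_injective (MvPolynomial.C_injective _ _) p
    -- the specialized `F` and `G` vanish at `C α`
    have hPx : (F.map ψ).eval (MvPolynomial.C α) = 0 := by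
      have : Φ F = 0 := by rw [hF, key, hroot, map_zero]
      simpa [hΦ] using this
    have hQx : (G.map ψ).eval (MvPolynomial.C α) = 0 := by
      have : Φ G = 0 := by
        rw [hG, map_add, map_sum, key, hroot, map_zero, zero_add]
        apply Finset.sum_eq_zero
        intro j _
        rw [map_mul, key, hroot, map_zero, mul_zero]
      simpa [hΦ] using this
    -- `F` has positive degree
    have hdegF : 0 < F.natDegree := by
      rcases Nat.eq_zero_or_pos F.natDegree with h0 | h0
      · exfalso
        rw [hF, keydeg] at h0
        have hd0 : (Polynomial.map E (fbar 0)).natDegree = 0 :=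
          Nat.eq_zero_of_le_zero (le_trans Polynomial.natDegree_map_le h0.le)
        have := Polynomial.eq_C_of_natDegree_eq_zero hd0
        apply hfbar0_ne
        rw [this]
        have := hroot 0
        rw [Polynomial.eq_C_of_natDegree_eq_zero hd0, Polynomial.eval_C] at this
        rw [this, map_zero]
      · exact h0
    apply hres
    rw [show (MvPolynomial.map E) (sylvesterResultant F G) = ψ (sylvesterResultant F G) from rfl,
      map_sylvesterResultant ψ F G]
    exact sylvester_det_zero F.natDegree G.natDegree (F.map ψ) (G.map ψ)
      Polynomial.natDegree_map_le Polynomial.natDegree_map_le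
      (by omega) (MvPolynomial.C α) hPx hQx
  -- conclude
  have hgcd_eq : Finset.gcd Finset.univ (fun i => Polynomial.map E (f i))
      = normalize (Polynomial.map E h) * g := by
    rw [show (fun i : Fin (k + 2) => Polynomial.map E (f i))
        = fun i => Polynomial.map E h * Polynomial.map E (fbar i) from
      funext fun i => by rw [hfbar i, Polynomial.map_mul, mul_comm]]
    exact Finset.gcd_mul_left
  have hdg : d ∣ Finset.gcd Finset.univ (fun i => Polynomial.map E (f i)) :=
    Finset.dvd_gcd fun i _ => hd i
  rw [hgcd_eq] at hdg
  have hfin : normalize (Polynomial.map E h) * g ∣ Polynomial.map E h * 1 :=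
    mul_dvd_mul (normalize_associated _).dvd (isUnit_iff_dvd_one.mp hgu)
  rw [mul_one] at hfin
  exact hdg.trans hfin
end
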